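/- Commutation of sequential composition over disjoint variables: let S1, ..., Sn be statements over pairwise disjoint sets of variables and let π be any permutation of {1, ..., n}. Then for all valuations σ, σ', σ ⊢ S1; ...; Sn ⇓ σ' if and only if σ ⊢ Sπ(1); ...; Sπ(n) ⇓ σ'. -/

import Mathlib

namespace ProgMerge

/-! ## A simple imperative language with arrays and holes -/

/-- Program variables. -/
abbrev Var := String

/-- Values: `none` is the distinguished uninitialized value `⊥`. -/
abbrev Val := Option Int

/-- A valuation maps (variable, index) pairs to values; reads of
uninitialized locations yield `⊥` (i.e. `none`). -/
abbrev Valuation := Var → Int → Val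

/-- Expressions. -/
inductive Expr where
  | const : Int → Expr
  | var : Var → Expr
  | arr : Var → Expr → Expr
  | add : Expr → Expr → Expr

/-- Expression evaluation. -/
def Expr.eval (σ : Valuation) : Expr → Val
  | .const n => some n
  | .var x => σ x 0
  | .arr x e =>
      match e.eval σ with
      | some i => σ x i
      | none => none
  | .add e₁ e₂ =>
      match e₁.eval σ, e₂.eval σ with
      | some a, some b => some (a + b)
      | _, _ => none

/-- Variables mentioned by an expression. -/
def Expr.vars : Expr → Set Var
  | .const _ => ∅
  | .var x => {x}
  | .arr x e => {x} ∪ e.vars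
  | .add e₁ e₂ => e₁.vars ∪ e₂.vars

/-- Boolean conditions. -/
inductive Cond where
  | eq : Expr → Expr → Cond
  | not : Cond → Cond
  | and : Cond → Cond → Cond

/-- Condition evaluation. -/
def Cond.eval (σ : Valuation) : Cond → Bool
  | .eq e₁ e₂ => decide (e₁.eval σ = e₂.eval σ)
  | .not c => !(c.eval σ)
  | .and c₁ c₂ => c₁.eval σ && c₂.eval σ

/-- Variables mentioned by a condition. -/
def Cond.vars : Cond → Set Var
  | .eq e₁ e₂ => e₁.vars ∪ e₂.vars
  | .not c => c.vars
  | .and c₁ c₂ => c₁.vars ∪ c₂.vars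

/-- Statements, possibly containing holes `??` (constructor `hole`).
Hole-free statements are the statements of the base language. -/
inductive Stmt where
  | hole : Stmt
  | skip : Stmt
  | assign : Var → Expr → Stmt
  | arrAssign : Var → Expr → Expr → Stmt
  | seq : Stmt → Stmt → Stmt
  | ifte : Cond → Stmt → Stmt → Stmt
  | whileDo : Cond → Stmt → Stmt

instance : Inhabited Stmt := ⟨.skip⟩

/-- Variables mentioned by a statement (including its conditions and expressions). -/
def Stmt.vars : Stmt → Set Var
  | .hole => ∅
  | .skip => ∅
  | .assign x e => {x} ∪ e.vars
  | .arrAssign x e₁ e₂ => {x} ∪ e₁.vars ∪ e₂.vars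
  | .seq s₁ s₂ => s₁.vars ∪ s₂.vars
  | .ifte c s₁ s₂ => c.vars ∪ s₁.vars ∪ s₂.vars
  | .whileDo c s => c.vars ∪ s.vars

/-- Number of holes in a statement. -/
def Stmt.numHoles : Stmt → ℕ
  | .hole => 1
  | .skip => 0
  | .assign _ _ => 0
  | .arrAssign _ _ _ => 0
  | .seq s₁ s₂ => s₁.numHoles + s₂.numHoles
  | .ifte _ s₁ s₂ => s₁.numHoles + s₂.numHoles
  | .whileDo _ s => s.numHoles

/-- A statement is hole-free if it contains no holes. -/
def Stmt.HoleFree (s : Stmt) : Prop := s.numHoles = 0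

/-- Updating a valuation at a (variable, index) location. -/
def Valuation.update (σ : Valuation) (x : Var) (i : Int) (v : Val) : Valuation :=
  fun y j => if y = x ∧ j = i then v else σ y j

/-- Standard big-step operational semantics `σ ⊢ S ⇓ σ'`.
There is no rule for holes. -/
inductive BigStep : Stmt → Valuation → Valuation → Prop where
  | skip {σ} : BigStep .skip σ σ
  | assign {x e σ} : BigStep (.assign x e) σ (σ.update x 0 (e.eval σ))
  | arrAssign {x e₁ e₂ σ i} : e₁.eval σ = some i →
      BigStep (.arrAssign x e₁ e₂) σ (σ.update x i (e₂.eval σ))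
  | seq {s₁ s₂ σ σ₁ σ₂} : BigStep s₁ σ σ₁ → BigStep s₂ σ₁ σ₂ →
      BigStep (.seq s₁ s₂) σ σ₂
  | ifteTrue {c s₁ s₂ σ σ'} : c.eval σ = true → BigStep s₁ σ σ' →
      BigStep (.ifte c s₁ s₂) σ σ'
  | ifteFalse {c s₁ s₂ σ σ'} : c.eval σ = false → BigStep s₂ σ σ' →
      BigStep (.ifte c s₁ s₂) σ σ'
  | whileFalse {c s σ} : c.eval σ = false → BigStep (.whileDo c s) σ σ
  | whileTrue {c s σ σ₁ σ₂} : c.eval σ = true → BigStep s σ σ₁ →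
      BigStep (.whileDo c s) σ₁ σ₂ → BigStep (.whileDo c s) σ σ₂

/-- `Apply`: fill the holes of a statement with the successive entries of an
edit, in depth-first left-to-right order, returning the filled statement
together with the unconsumed remainder of the edit. -/
def Stmt.applyAux : Stmt → List Stmt → Stmt × List Stmt
  | .hole, s :: Δ => (s, Δ)
  | .hole, [] => (.hole, [])
  | .skip, Δ => (.skip, Δ)
  | .assign x e, Δ => (.assign x e, Δ)
  | .arrAssign x e₁ e₂, Δ => (.arrAssign x e₁ e₂, Δ)
  | .seq s₁ s₂, Δ =>
      match s₁.applyAux Δ with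
      | (t₁, Δ₁) =>
        match s₂.applyAux Δ₁ with
        | (t₂, Δ₂) => (.seq t₁ t₂, Δ₂)
  | .ifte c s₁ s₂, Δ =>
      match s₁.applyAux Δ with
      | (t₁, Δ₁) =>
        match s₂.applyAux Δ₁ with
        | (t₂, Δ₂) => (.ifte c t₁ t₂, Δ₂)
  | .whileDo c s, Δ =>
      match s.applyAux Δ with
      | (t, Δ') => (.whileDo c t, Δ')

/-- Edit application `Ŝ[Δ]`. -/
def Stmt.applyEdit (s : Stmt) (Δ : List Stmt) : Stmt := (s.applyAux Δ).1

/-- Total number of holes occurring in the entries of a (generalized) edit. -/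
def editNumHoles (Δ : List Stmt) : ℕ := (Δ.map Stmt.numHoles).sum

/-- Sequential composition `S₁; ...; Sₙ` of a list of statements. -/
def seqAll (P : List Stmt) : Stmt := P.foldr Stmt.seq .skip

/-! ### Auxiliary lemmas for commutation -/

attribute [local instance] Classical.propDecidable

/-- Two valuations agree on a set of variables. -/
def Agree (V : Set Var) (σ τ : Valuation) : Prop := ∀ x ∈ V, ∀ i, σ x i = τ x i

theorem Expr.eval_agree {σ τ : Valuation} : ∀ (e : Expr), Agree e.vars σ τ →
    e.eval σ = e.eval τ
  | .const _, _ => rfl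
  | .var x, h => h x rfl 0
  | .arr x e, h => by
      have he : e.eval σ = e.eval τ :=
        Expr.eval_agree e (fun y hy i => h y (Or.inr hy) i)
      simp only [Expr.eval, he]
      cases e.eval τ with
      | none => rfl
      | some i => exact h x (Or.inl rfl) i
  | .add e₁ e₂, h => by
      have h₁ : e₁.eval σ = e₁.eval τ :=
        Expr.eval_agree e₁ (fun y hy i => h y (Or.inl hy) i)
      have h₂ : e₂.eval σ = e₂.eval τ :=
        Expr.eval_agree e₂ (fun y hy i => h y (Or.inr hy) i)
      simp only [Expr.eval, h₁, h₂]

theorem Cond.eval_agree {σ τ : Valuation} : ∀ (c : Cond), Agree c.vars σ τ →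
    c.eval σ = c.eval τ
  | .eq e₁ e₂, h => by
      have h₁ := Expr.eval_agree e₁ (fun y hy i => h y (Or.inl hy) i)
      have h₂ := Expr.eval_agree e₂ (fun y hy i => h y (Or.inr hy) i)
      simp only [Cond.eval, h₁, h₂]
  | .not c, h => by
      simp only [Cond.eval, Cond.eval_agree c h]
  | .and c₁ c₂, h => by
      have h₁ := Cond.eval_agree c₁ (fun y hy i => h y (Or.inl hy) i)
      have h₂ := Cond.eval_agree c₂ (fun y hy i => h y (Or.inr hy) i)
      simp only [Cond.eval, h₁, h₂]

/-- Frame property: execution does not change variables outside `s.vars`. -/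
theorem bigStep_frame {s : Stmt} {σ σ' : Valuation} (h : BigStep s σ σ') :
    ∀ x, x ∉ s.vars → ∀ i, σ' x i = σ x i := by
  induction h with
  | skip => intro x _ i; rfl
  | @assign x e σ =>
      intro y hy i
      have hyx : y ≠ x := fun h => hy (by simp [Stmt.vars, h])
      simp [Valuation.update, hyx]
  | @arrAssign x e₁ e₂ σ j hj =>
      intro y hy i
      have hyx : y ≠ x := fun h => hy (by simp [Stmt.vars, h])
      simp [Valuation.update, hyx]
  | @seq s₁ s₂ σ σ₁ σ₂ h₁ h₂ ih₁ ih₂ =>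
      intro y hy i
      have hy₁ : y ∉ s₁.vars := fun h => hy (Or.inl h)
      have hy₂ : y ∉ s₂.vars := fun h => hy (Or.inr h)
      rw [ih₂ y hy₂ i, ih₁ y hy₁ i]
  | @ifteTrue c s₁ s₂ σ σ' _ _ ih =>
      intro y hy i
      exact ih y (fun h => hy (Or.inl (Or.inr h))) i
  | @ifteFalse c s₁ s₂ σ σ' _ _ ih =>
      intro y hy i
      exact ih y (fun h => hy (Or.inr h)) i
  | whileFalse _ => intro y _ i; rfl
  | @whileTrue c s σ σ₁ σ₂ _ _ _ ih₁ ih₂ =>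
      intro y hy i
      rw [ih₂ y hy i, ih₁ y (fun h => hy (Or.inr h)) i]

theorem BigStep.cast {s : Stmt} {σ σ₁ σ₂ : Valuation} (h : BigStep s σ σ₁)
    (e : σ₁ = σ₂) : BigStep s σ σ₂ := e ▸ h

/-- Transfer: execution only depends on the variables of the statement, and only
changes those variables. -/
theorem bigStep_agree {s : Stmt} {σ σ' : Valuation} (h : BigStep s σ σ') :
    ∀ τ : Valuation, Agree s.vars σ τ →
      BigStep s τ (fun x i => if x ∈ s.vars then σ' x i else τ x i) := by
  induction h with
  | @skip σ =>
      intro τ hag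
      refine BigStep.skip.cast ?_
      funext x i
      by_cases hx : x ∈ Stmt.vars .skip
      · simp only [hx, if_true]; exact (hag x hx i).symm
      · simp only [hx, if_false]
  | @assign x e σ =>
      intro τ hag
      have he : e.eval σ = e.eval τ :=
        Expr.eval_agree e (fun y hy i => hag y (Or.inr hy) i)
      refine BigStep.assign.cast ?_
      funext y i
      simp only [Valuation.update, Stmt.vars]
      by_cases hyi : y = x ∧ i = 0
      · simp [hyi.1, hyi.2, he]
      · simp only [hyi, if_false]
        by_cases hy : y ∈ ({x} : Set Var) ∪ e.vars
        · simp only [hy, if_true]; exact (hag y hy i).symm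
        · simp only [hy, if_false]
  | @arrAssign x e₁ e₂ σ j hj =>
      intro τ hag
      have h₁ : e₁.eval σ = e₁.eval τ :=
        Expr.eval_agree e₁ (fun y hy i => hag y (Or.inl (Or.inr hy)) i)
      have h₂ : e₂.eval σ = e₂.eval τ :=
        Expr.eval_agree e₂ (fun y hy i => hag y (Or.inr hy) i)
      refine (BigStep.arrAssign (h₁ ▸ hj)).cast ?_
      funext y i
      simp only [Valuation.update, Stmt.vars]
      by_cases hyi : y = x ∧ i = j
      · simp [hyi.1, hyi.2, h₂]
      · simp only [hyi, if_false]
        by_cases hy : y ∈ ({x} : Set Var) ∪ e₁.vars ∪ e₂.vars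
        · simp only [hy, if_true]; exact (hag y hy i).symm
        · simp only [hy, if_false]
  | @seq s₁ s₂ σ σ₁ σ₂ h₁ h₂ ih₁ ih₂ =>
      intro τ hag
      have hb₁ := ih₁ τ (fun y hy i => hag y (Or.inl hy) i)
      have hag₂ : Agree s₂.vars σ₁ (fun x i => if x ∈ s₁.vars then σ₁ x i else τ x i) := by
        intro y hy i
        by_cases hy₁ : y ∈ s₁.vars
        · simp [hy₁]
        · simp only [hy₁, if_false]
          rw [bigStep_frame h₁ y hy₁ i]
          exact hag y (Or.inr hy) i
      have hb₂ := ih₂ _ hag₂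
      refine (BigStep.seq hb₁ hb₂).cast ?_
      funext y i
      simp only [Stmt.vars]
      by_cases hy₂ : y ∈ s₂.vars
      · simp [hy₂]
      · simp only [hy₂, if_false]
        by_cases hy₁ : y ∈ s₁.vars
        · simp only [hy₁, if_true, Set.mem_union, or_false]
          exact (bigStep_frame h₂ y hy₂ i).symm
        · simp [hy₁, hy₂]
  | @ifteTrue c s₁ s₂ σ σ' hc hb ih =>
      intro τ hag
      have hc' : c.eval τ = true := by
        rw [← Cond.eval_agree c (fun y hy i => hag y (Or.inl (Or.inl hy)) i)]; exact hc
      have hb' := ih τ (fun y hy i => hag y (Or.inl (Or.inr hy)) i)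
      refine (BigStep.ifteTrue hc' hb').cast ?_
      funext y i
      simp only [Stmt.vars]
      by_cases hy₁ : y ∈ s₁.vars
      · simp [hy₁]
      · simp only [hy₁, if_false]
        by_cases hy : y ∈ c.vars ∪ s₁.vars ∪ s₂.vars
        · simp only [hy, if_true]
          rw [bigStep_frame hb y hy₁ i]; exact (hag y hy i).symm
        · simp only [hy, if_false]
  | @ifteFalse c s₁ s₂ σ σ' hc hb ih =>
      intro τ hag
      have hc' : c.eval τ = false := by
        rw [← Cond.eval_agree c (fun y hy i => hag y (Or.inl (Or.inl hy)) i)]; exact hc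
      have hb' := ih τ (fun y hy i => hag y (Or.inr hy) i)
      refine (BigStep.ifteFalse hc' hb').cast ?_
      funext y i
      simp only [Stmt.vars]
      by_cases hy₂ : y ∈ s₂.vars
      · simp [hy₂]
      · simp only [hy₂, if_false]
        by_cases hy : y ∈ c.vars ∪ s₁.vars ∪ s₂.vars
        · simp only [hy, if_true]
          rw [bigStep_frame hb y hy₂ i]; exact (hag y hy i).symm
        · simp only [hy, if_false]
  | @whileFalse c s σ hc =>
      intro τ hag
      have hc' : c.eval τ = false := by
        rw [← Cond.eval_agree c (fun y hy i => hag y (Or.inl hy) i)]; exact hc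
      refine (BigStep.whileFalse hc').cast ?_
      funext y i
      by_cases hy : y ∈ (Stmt.whileDo c s).vars
      · simp only [hy, if_true]; exact (hag y hy i).symm
      · simp only [hy, if_false]
  | @whileTrue c s σ σ₁ σ₂ hc hb hw ihb ihw =>
      intro τ hag
      have hc' : c.eval τ = true := by
        rw [← Cond.eval_agree c (fun y hy i => hag y (Or.inl hy) i)]; exact hc
      have hb' := ihb τ (fun y hy i => hag y (Or.inr hy) i)
      have hag₁ : Agree (Stmt.whileDo c s).vars σ₁
          (fun x i => if x ∈ s.vars then σ₁ x i else τ x i) := by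
        intro y hy i
        by_cases hy₁ : y ∈ s.vars
        · simp [hy₁]
        · simp only [hy₁, if_false]
          rw [bigStep_frame hb y hy₁ i]
          exact hag y hy i
      have hw' := ihw _ hag₁
      refine (BigStep.whileTrue hc' hb' hw').cast ?_
      funext y i
      by_cases hy : y ∈ (Stmt.whileDo c s).vars
      · simp only [hy, if_true]
      · have hy₁ : y ∉ s.vars := fun h => hy (Or.inr h)
        simp only [hy, hy₁, if_false]

/-- Semantic commutation of two statements with disjoint variables. -/
theorem bigStep_comm {s t : Stmt} (hd : Disjoint s.vars t.vars)
    {σ σ₁ σ₂ : Valuation} (hs : BigStep s σ σ₁) (ht : BigStep t σ₁ σ₂) :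
    ∃ τ, BigStep t σ τ ∧ BigStep s τ σ₂ := by
  have hnots : ∀ x ∈ t.vars, x ∉ s.vars := fun x hx hx' =>
    (Set.disjoint_left.mp hd hx') hx
  have hnott : ∀ x ∈ s.vars, x ∉ t.vars := fun x hx hx' =>
    (Set.disjoint_left.mp hd hx) hx'
  have hag : Agree t.vars σ₁ σ := fun x hx i => bigStep_frame hs x (hnots x hx) i
  have hag' : Agree t.vars σ σ₁ := fun x hx i => (hag x hx i).symm
  have hbt := bigStep_agree ht σ hag
  refine ⟨_, hbt, ?_⟩
  have hags : Agree s.vars σ (fun x i => if x ∈ t.vars then σ₂ x i else σ x i) := by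
    intro y hy i
    simp [hnott y hy]
  have hbs := bigStep_agree hs _ hags
  refine hbs.cast ?_
  funext y i
  by_cases hy : y ∈ s.vars
  · simp only [hy, if_true]
    exact (bigStep_frame ht y (hnott y hy) i).symm
  · simp only [hy, if_false]
    by_cases hy' : y ∈ t.vars
    · simp only [hy', if_true]
    · simp only [hy', if_false]
      rw [← bigStep_frame hs y hy i, ← bigStep_frame ht y hy' i]

/-- Swapping the first two statements of a sequence. -/
theorem bigStep_seq_swap {a b t : Stmt} (hd : Disjoint a.vars b.vars)
    {σ σ' : Valuation} (h : BigStep (.seq a (.seq b t)) σ σ') :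
    BigStep (.seq b (.seq a t)) σ σ' := by
  cases h with
  | seq ha hrest =>
    cases hrest with
    | seq hb ht =>
      obtain ⟨τ, hb', ha'⟩ := bigStep_comm hd ha hb
      exact BigStep.seq hb' (BigStep.seq ha' ht)

/-- Main permutation lemma on lists. -/
theorem seqAll_perm {l₁ l₂ : List Stmt} (hp : l₁.Perm l₂)
    (hpw : l₁.Pairwise (fun a b => Disjoint a.vars b.vars)) :
    ∀ σ σ' : Valuation, BigStep (seqAll l₁) σ σ' ↔ BigStep (seqAll l₂) σ σ' := by
  induction hp with
  | nil => intro σ σ'; rfl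
  | @cons a l₁ l₂ hp ih =>
      intro σ σ'
      have hpw' := hpw.of_cons
      constructor
      · intro h
        cases h with
        | seq ha hrest => exact BigStep.seq ha ((ih hpw' _ _).mp hrest)
      · intro h
        cases h with
        | seq ha hrest => exact BigStep.seq ha ((ih hpw' _ _).mpr hrest)
  | @swap a b l =>
      intro σ σ'
      have hd : Disjoint b.vars a.vars :=
        List.rel_of_pairwise_cons hpw List.mem_cons_self
      exact ⟨bigStep_seq_swap hd, bigStep_seq_swap (Disjoint.symm hd)⟩
  | @trans l₁ l₂ l₃ hp₁ hp₂ ih₁ ih₂ =>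
      intro σ σ'
      have hpw₂ : l₂.Pairwise (fun a b => Disjoint a.vars b.vars) :=
        (hp₁.pairwise_iff (fun {_ _} h => Disjoint.symm h)).mp hpw
      exact (ih₁ hpw _ _).trans (ih₂ hpw₂ _ _)

/-- **Commutation of sequential composition over disjoint variables**: if
`S₁, ..., Sₙ` are statements over pairwise disjoint sets of variables and
`π` is any permutation of `{1, ..., n}`, then `S₁; ...; Sₙ` and
`S_{π(1)}; ...; S_{π(n)}` have the same big-step behavior. -/
theorem seq_commute_of_disjoint
    (n : ℕ) (S : Fin n → Stmt)
    (hholeFree : ∀ i, (S i).HoleFree)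
    (hdisj : ∀ i j, i ≠ j → Disjoint (S i).vars (S j).vars)
    (π : Equiv.Perm (Fin n)) :
    ∀ σ σ' : Valuation,
      BigStep (seqAll (List.ofFn S)) σ σ' ↔
        BigStep (seqAll (List.ofFn fun i => S (π i))) σ σ' := by
  intro σ σ'
  have hperm : (List.ofFn fun i => S (π i)).Perm (List.ofFn S) :=
    Equiv.Perm.ofFn_comp_perm π S
  have hpw : (List.ofFn S).Pairwise (fun a b => Disjoint a.vars b.vars) :=
    List.pairwise_ofFn.mpr (fun i j hij => hdisj i j (Fin.ne_of_lt hij))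
  exact seqAll_perm hperm.symm hpw σ σ'

end ProgMerge
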